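/- Let W be a complex vector space, N a positive integer, a ∈ Ē(W), n ∈ ℤ, and w ∈ W. Then there exist r ∈ ℕ and complex numbers β₀, β₁, …, β_r (depending on a, n and w) such that (ψ_R(a))_n w = Σ_{i=0}^{r} β_i a_{n+Ni} w. -/
import Mathlib


open scoped TensorProduct

noncomputable section
namespace Twisted

variable (N : ℕ) (W : Type) [AddCommGroup W] [Module ℂ W]

/-- The shift operator on `F(W) = (ℤ → End W)`, encoding multiplication by `x`:
`(x·a)_k = a_{k+N}`. -/
def shiftE : Module.End ℂ (ℤ → Module.End ℂ W) where
  toFun a := fun k => a (k + N)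
  map_add' _ _ := rfl
  map_smul' _ _ := rfl

/-- The action of `ℂ[x]` on `F(W)`. -/
def polyAct (p : Polynomial ℂ) (a : ℤ → Module.End ℂ W) : ℤ → Module.End ℂ W :=
  Polynomial.aeval (shiftE N W) p a

/-- Membership in `E(W)`. -/
def memE (a : ℤ → Module.End ℂ W) : Prop :=
  ∀ w : W, ∃ M : ℤ, ∀ k ≥ M, a k w = 0

/-- Membership in `Ē(W)`. -/
def memEbar (a : ℤ → Module.End ℂ W) : Prop :=
  ∃ p : Polynomial ℂ, p ≠ 0 ∧ memE W (polyAct N W p a)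

/-- Membership in `Ē₀(W)`. -/
def memE0 (a : ℤ → Module.End ℂ W) : Prop :=
  ∃ p : Polynomial ℂ, p ≠ 0 ∧ polyAct N W p a = 0


lemma shiftE_pow (j : ℕ) (a : ℤ → Module.End ℂ W) (k : ℤ) :
    ((shiftE N W ^ j) a) k = a (k + N * j) := by
  induction j generalizing a with
  | zero => simp
  | succ j ih =>
    rw [pow_succ, Module.End.mul_apply, ih]
    show a (k + N * j + N) = _
    congr 1
    push_cast
    ring

lemma polyAct_apply (p : Polynomial ℂ) (a : ℤ → Module.End ℂ W) (k : ℤ) :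
    polyAct N W p a k =
      ∑ j ∈ Finset.range (p.natDegree + 1), p.coeff j • a (k + N * j) := by
  unfold polyAct
  rw [Polynomial.aeval_eq_sum_range]
  have : ((∑ j ∈ Finset.range (p.natDegree + 1), p.coeff j • (shiftE N W ^ j)) a) k
      = ∑ j ∈ Finset.range (p.natDegree + 1), p.coeff j • ((shiftE N W ^ j) a) k := by
    rw [LinearMap.sum_apply]
    simp [Finset.sum_apply]
  rw [this]
  exact Finset.sum_congr rfl fun j _ => by rw [shiftE_pow]

/-- For `a ∈ Ē(W)`, `n ∈ ℤ` and `w ∈ W` there are `r ∈ ℕ` and complex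
numbers `β₀, …, β_r` with `(ψ_R(a))_n w = Σ_{i=0}^{r} β_i a_{n+Ni} w`; here `ψ_R(a)` is
characterized as the unique `e ∈ E(W)` with `a − e ∈ Ē₀(W)`. -/
theorem statement14 (N : ℕ) (hN : 0 < N) (W : Type) [AddCommGroup W] [Module ℂ W]
    (a : ℤ → Module.End ℂ W) (ha : memEbar N W a) (n : ℤ) (w : W) :
    ∀ e : ℤ → Module.End ℂ W, memE W e → memE0 N W (a - e) →
      ∃ (r : ℕ) (β : ℕ → ℂ),
        e n w = ∑ i ∈ Finset.range (r + 1), β i • a (n + N * i) w := by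
  intro e he h0
  obtain ⟨p, hp, hpe⟩ := h0
  obtain ⟨M, hM⟩ := he w
  set D := p.natDegree with hD
  set m := p.natTrailingDegree with hm
  have hc : p.coeff m ≠ 0 := Polynomial.trailingCoeff_nonzero_iff_nonzero.mpr hp
  have hmD : m ≤ D := p.natTrailingDegree_le_natDegree
  -- pointwise equation
  have key : ∀ k : ℤ,
      ∑ j ∈ Finset.range (D + 1), p.coeff j • e (k + N * j) w
        = ∑ j ∈ Finset.range (D + 1), p.coeff j • a (k + N * j) w := by
    intro k
    have h1 : polyAct N W p (a - e) k w = 0 := by rw [hpe]; rfl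
    rw [polyAct_apply] at h1
    simp only [LinearMap.sum_apply, LinearMap.smul_apply, Pi.sub_apply,
      LinearMap.sub_apply, smul_sub] at h1
    rw [Finset.sum_sub_distrib] at h1
    exact (sub_eq_zero.mp h1).symm
  set S : Submodule ℂ W := Submodule.span ℂ (Set.range fun i : ℕ => a (n + N * i) w) with hS
  have hf : ∀ i : ℕ, a (n + N * i) w ∈ S := fun i => Submodule.subset_span ⟨i, rfl⟩
  have hN1 : (1 : ℤ) ≤ (N : ℤ) := by exact_mod_cast hN
  have claim : ∀ d : ℕ, ∀ t : ℕ, M ≤ n + N * t + N * d → e (n + N * t) w ∈ S := by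
    intro d
    induction d with
    | zero =>
      intro t ht
      have h0 : e (n + N * t) w = 0 := hM _ (by simpa using ht)
      rw [h0]; exact S.zero_mem
    | succ d ih =>
      intro t ht
      set k : ℤ := n + N * t - N * m with hk
      have hidx : ∀ j : ℕ, m ≤ j → k + N * j = n + N * ((t + (j - m) : ℕ) : ℤ) := by
        intro j hj
        have : ((j - m : ℕ) : ℤ) = (j : ℤ) - m := by exact_mod_cast Int.ofNat_sub hj
        push_cast [this]
        ring
      have hmmem : m ∈ Finset.range (D + 1) := Finset.mem_range.mpr (Nat.lt_succ_of_le hmD)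
      have hsplit := Finset.add_sum_erase (Finset.range (D + 1))
        (fun j => p.coeff j • e (k + N * j) w) hmmem
      have hkm : k + N * m = n + N * t := by rw [hk]; ring
      have hA : (∑ j ∈ Finset.range (D + 1), p.coeff j • a (k + N * j) w) ∈ S := by
        refine Submodule.sum_mem S fun j _ => ?_
        rcases lt_or_ge j m with hj | hj
        · rw [Polynomial.coeff_eq_zero_of_lt_natTrailingDegree hj, zero_smul]
          exact S.zero_mem
        · rw [hidx j hj]
          exact S.smul_mem _ (hf _)
      have hB : (∑ j ∈ (Finset.range (D + 1)).erase m, p.coeff j • e (k + N * j) w) ∈ S := by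
        refine Submodule.sum_mem S fun j hjmem => ?_
        have hjne : j ≠ m := (Finset.mem_erase.mp hjmem).1
        rcases lt_or_ge j m with hj | hj
        · rw [Polynomial.coeff_eq_zero_of_lt_natTrailingDegree hj, zero_smul]
          exact S.zero_mem
        · have hjm : m < j := lt_of_le_of_ne hj (Ne.symm hjne)
          rw [hidx j hj]
          refine S.smul_mem _ (ih (t + (j - m)) ?_)
          have h1le : (1 : ℤ) ≤ ((j - m : ℕ) : ℤ) := by
            exact_mod_cast Nat.one_le_iff_ne_zero.mpr (Nat.sub_ne_zero_of_lt hjm)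
          have : (N : ℤ) * 1 ≤ (N : ℤ) * ((j - m : ℕ) : ℤ) :=
            mul_le_mul_of_nonneg_left h1le (by positivity)
          push_cast
          push_cast at ht
          nlinarith
      have hrec : p.coeff m • e (n + N * t) w
          = (∑ j ∈ Finset.range (D + 1), p.coeff j • a (k + N * j) w)
            - ∑ j ∈ (Finset.range (D + 1)).erase m, p.coeff j • e (k + N * j) w := by
        rw [← key k, ← hsplit]
        simp only [hkm]
        abel
      have : e (n + N * t) w = (p.coeff m)⁻¹ • (p.coeff m • e (n + N * t) w) := by
        rw [smul_smul, inv_mul_cancel₀ hc, one_smul]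
      rw [this, hrec]
      exact S.smul_mem _ (S.sub_mem hA hB)
  have hmem2 : e n w ∈ S := by
    have hd : M ≤ n + N * (0 : ℕ) + N * ((M - n).toNat : ℤ) := by
      have h1 : M - n ≤ ((M - n).toNat : ℤ) := Int.self_le_toNat _
      have h2 : ((M - n).toNat : ℤ) ≤ (N : ℤ) * ((M - n).toNat : ℤ) :=
        le_mul_of_one_le_left (by positivity) hN1
      push_cast
      linarith
    simpa using claim ((M - n).toNat) 0 hd
  rw [hS] at hmem2
  obtain ⟨c, hcsum⟩ := Finsupp.mem_span_range_iff_exists_finsupp.mp hmem2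
  refine ⟨c.support.sup id, fun i => c i, ?_⟩
  rw [← hcsum]
  exact Finsupp.sum_of_support_subset c
    (fun i hi => Finset.mem_range.mpr (Nat.lt_succ_of_le (Finset.le_sup (f := id) hi)))
    _ (fun i _ => zero_smul ℂ _)


end Twisted
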